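/- Let Y be a Hilbert space, K ∈ L(Y) compact selfadjoint positive semidefinite, and let Ỹ := (ker K)^⊥. Then for τ → 0⁺ the operators (P_Ỹ(τ I + K)|_Ỹ)^{-1/2} K^{1/2} converge pointwise (in the strong operator topology) to the orthogonal projection P_Ỹ onto Ỹ. -/

import Mathlib

open Filter Topology

section AuxCFC

lemma commute_cfcHom_aux {A : Type*} [CStarAlgebra A] {a b : A} (hb : IsSelfAdjoint b)
    (h : Commute a b) (g : C(spectrum ℝ b, ℝ)) : Commute a (cfcHom hb (R := ℝ) g) := by
  have hcont : Continuous (fun g : C(spectrum ℝ b, ℝ) => cfcHom hb (R := ℝ) g) :=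
    (cfcHom_isClosedEmbedding hb).continuous
  induction g using ContinuousMap.induction_on_of_compact with
  | const r =>
    have : (ContinuousMap.const (spectrum ℝ b) r) = algebraMap ℝ C(spectrum ℝ b, ℝ) r := rfl
    rw [this, AlgHomClass.commutes]
    rw [Algebra.algebraMap_eq_smul_one]
    exact (Commute.one_right a).smul_right r
  | id => rw [cfcHom_id hb]; exact h
  | star_id =>
    have : star (ContinuousMap.restrict (spectrum ℝ b) (ContinuousMap.id ℝ)) =
        ContinuousMap.restrict (spectrum ℝ b) (ContinuousMap.id ℝ) := by
      ext x; simp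
    rw [this, cfcHom_id hb]; exact h
  | add f g hf hg => rw [map_add]; exact hf.add_right hg
  | mul f g hf hg => rw [map_mul]; exact hf.mul_right hg
  | frequently f hf =>
    have hclosed : IsClosed {g : C(spectrum ℝ b, ℝ) | Commute a (cfcHom hb (R := ℝ) g)} := by
      have : {g : C(spectrum ℝ b, ℝ) | Commute a (cfcHom hb (R := ℝ) g)} =
          {g | a * cfcHom hb (R := ℝ) g = cfcHom hb (R := ℝ) g * a} := rfl
      rw [this]
      exact isClosed_eq (continuous_const.mul hcont) (hcont.mul continuous_const)
    exact hclosed.closure_subset (mem_closure_iff_frequently.mpr hf)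

lemma commute_cfc' {A : Type*} [CStarAlgebra A] {a b : A} (h : Commute a b) (f : ℝ → ℝ) :
    Commute a (cfc f b) := by
  refine cfc_cases (fun x => Commute a x) b f (Commute.zero_right a) fun hf hb => ?_
  exact commute_cfcHom_aux hb h _

lemma cfc_sqrt_mul_self' {A : Type*} [CStarAlgebra A] [PartialOrder A] [StarOrderedRing A]
    {b : A} (hb : 0 ≤ b) : cfc Real.sqrt b * cfc Real.sqrt b = b := by
  rw [← cfc_mul Real.sqrt Real.sqrt b Real.continuous_sqrt.continuousOn
    Real.continuous_sqrt.continuousOn]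
  have h1 : Set.EqOn (fun x : ℝ => Real.sqrt x * Real.sqrt x) id (spectrum ℝ b) := fun x hx =>
    Real.mul_self_sqrt (spectrum_nonneg_of_nonneg hb hx)
  rw [cfc_congr h1, cfc_id ℝ b (IsSelfAdjoint.of_nonneg hb)]

lemma cfc_sqrt_unique' {A : Type*} [CStarAlgebra A] [PartialOrder A] [StarOrderedRing A]
    {b c : A} (hc : 0 ≤ c) (h : c * c = b) : cfc Real.sqrt b = c := by
  have hcsa : IsSelfAdjoint c := IsSelfAdjoint.of_nonneg hc
  have h1 : cfc (fun x : ℝ => x * x) c = b := by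
    rw [show (fun x : ℝ => x * x) = (fun x : ℝ => id x * id x) from rfl,
      cfc_mul id id c continuous_id.continuousOn continuous_id.continuousOn, cfc_id ℝ c hcsa, h]
  have h2 : cfc (Real.sqrt ∘ (fun x : ℝ => x * x)) c = cfc Real.sqrt b := by
    rw [cfc_comp Real.sqrt (fun x : ℝ => x * x) c hcsa
      (Real.continuous_sqrt.continuousOn (s := ((fun x : ℝ => x * x) '' spectrum ℝ c)))
      (continuous_id.mul continuous_id).continuousOn, h1]
  rw [← h2]
  have h3 : Set.EqOn (Real.sqrt ∘ (fun x : ℝ => x * x)) id (spectrum ℝ c) := fun x hx => by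
    simp only [Function.comp_apply, id_eq]
    exact Real.sqrt_mul_self (spectrum_nonneg_of_nonneg hc hx)
  rw [cfc_congr h3, cfc_id ℝ c hcsa]

lemma cfc_sqrt_nonneg' {A : Type*} [CStarAlgebra A] [PartialOrder A] [StarOrderedRing A]
    (b : A) : 0 ≤ cfc Real.sqrt b :=
  cfc_nonneg fun x _ => Real.sqrt_nonneg x

end AuxCFC

set_option maxHeartbeats 2000000 in
/-- Let `K` be compact selfadjoint positive semidefinite with positive square
root `R`, let `N := (ker K)ᗮ`, `P` the orthogonal projection onto `N`, and for `τ > 0` let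
`Q τ` be the (extension by zero of the) inverse square root of the compression of `τI + K`
to `N`, i.e. `Q τ` is selfadjoint positive semidefinite, has range in `N`, vanishes on `Nᗮ`
and satisfies `Q τ (Q τ ((τI + K) x)) = x` for `x ∈ N`. Then `(Q τ) ∘ R` converges pointwise
(strongly) to `P` as `τ → 0⁺`. -/
theorem stmt_9 {Y : Type*} [NormedAddCommGroup Y] [InnerProductSpace ℂ Y] [CompleteSpace Y]
    (K R : Y →L[ℂ] Y)
    (hKc : IsCompactOperator ⇑K) (hKsa : IsSelfAdjoint K)
    (hKpos : ∀ y : Y, 0 ≤ (inner ℂ (K y) y : ℂ).re)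
    (hRsa : IsSelfAdjoint R) (hRpos : ∀ y : Y, 0 ≤ (inner ℂ (R y) y : ℂ).re)
    (hRR : R ∘L R = K)
    (P : Y →L[ℂ] Y) (hPsa : IsSelfAdjoint P)
    (hPmem : ∀ y : Y, P y ∈ (LinearMap.ker (K : Y →ₗ[ℂ] Y))ᗮ)
    (hPfix : ∀ y ∈ (LinearMap.ker (K : Y →ₗ[ℂ] Y))ᗮ, P y = y)
    (Q : ℝ → (Y →L[ℂ] Y))
    (hQsa : ∀ τ > (0 : ℝ), IsSelfAdjoint (Q τ))
    (hQpos : ∀ τ > (0 : ℝ), ∀ y : Y, 0 ≤ (inner ℂ (Q τ y) y : ℂ).re)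
    (hQmem : ∀ τ > (0 : ℝ), ∀ y : Y, Q τ y ∈ (LinearMap.ker (K : Y →ₗ[ℂ] Y))ᗮ)
    (hQzero : ∀ τ > (0 : ℝ), ∀ y ∈ ((LinearMap.ker (K : Y →ₗ[ℂ] Y))ᗮ : Submodule ℂ Y)ᗮ, Q τ y = 0)
    (hQinv : ∀ τ > (0 : ℝ), ∀ x ∈ (LinearMap.ker (K : Y →ₗ[ℂ] Y))ᗮ,
      Q τ (Q τ ((τ • (1 : Y →L[ℂ] Y) + K : Y →L[ℂ] Y) x)) = x) :
    ∀ y : Y, Filter.Tendsto (fun τ => Q τ (R y)) (nhdsWithin 0 (Set.Ioi 0)) (nhds (P y)) := by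
  -- basic symmetry and inner ℂ product facts
  have hKsym : ∀ a b : Y, (inner ℂ (K a) b : ℂ) = inner ℂ a (K b) := fun a b => hKsa.isSymmetric a b
  have hRsym : ∀ a b : Y, (inner ℂ (R a) b : ℂ) = inner ℂ a (R b) := fun a b => hRsa.isSymmetric a b
  have hPsym : ∀ a b : Y, (inner ℂ (P a) b : ℂ) = inner ℂ a (P b) := fun a b => hPsa.isSymmetric a b
  have hQsym : ∀ τ : ℝ, 0 < τ → ∀ a b : Y, (inner ℂ (Q τ a) b : ℂ) = inner ℂ a (Q τ b) :=
    fun τ hτ a b => (hQsa τ hτ).isSymmetric a b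
  have hnormsq : ∀ x : Y, (inner ℂ x x : ℂ).re = ‖x‖ ^ 2 := fun x =>
    inner_self_eq_norm_sq (𝕜 := ℂ) x
  have hresym : ∀ a b : Y, (inner ℂ a b : ℂ).re = (inner ℂ b a : ℂ).re := fun a b =>
    inner_re_symm (𝕜 := ℂ) a b
  have hreCS : ∀ a b : Y, (inner ℂ a b : ℂ).re ≤ ‖a‖ * ‖b‖ := fun a b =>
    re_inner_le_norm (𝕜 := ℂ) a b
  have hRRapp : ∀ u : Y, R (R u) = K u := fun u => by rw [← hRR]; rfl
  have hRnormsq : ∀ u : Y, ‖R u‖ ^ 2 = (inner ℂ u (K u) : ℂ).re := fun u => by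
    rw [← hnormsq, hRsym u (R u), hRRapp u]
  have hkerR : ∀ u : Y, u ∈ LinearMap.ker (K : Y →ₗ[ℂ] Y) → R u = 0 := by
    intro u hu
    have h0 : K u = 0 := LinearMap.mem_ker.mp hu
    have h1 : ‖R u‖ ^ 2 = 0 := by rw [hRnormsq u, h0, inner_zero_right]; simp
    have h2 : ‖R u‖ = 0 := by nlinarith [norm_nonneg (R u)]
    simpa using h2
  have hKN : ∀ x : Y, K x ∈ (LinearMap.ker (K : Y →ₗ[ℂ] Y))ᗮ := fun x =>
    (Submodule.mem_orthogonal _ _).mpr fun u hu => by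
      rw [← hKsym u x, show K u = 0 from LinearMap.mem_ker.mp hu, inner_zero_left]
  have hRN : ∀ x : Y, R x ∈ (LinearMap.ker (K : Y →ₗ[ℂ] Y))ᗮ := fun x =>
    (Submodule.mem_orthogonal _ _).mpr fun u hu => by
      rw [← hRsym u x, hkerR u hu, inner_zero_left]
  haveI : CompleteSpace (LinearMap.ker (K : Y →ₗ[ℂ] Y)) := (ContinuousLinearMap.isClosed_ker K).completeSpace_coe
  have hNN : ((LinearMap.ker (K : Y →ₗ[ℂ] Y))ᗮ)ᗮ = LinearMap.ker (K : Y →ₗ[ℂ] Y) := Submodule.orthogonal_orthogonal _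
  have hPid : ∀ z : Y, z - P z ∈ ((LinearMap.ker (K : Y →ₗ[ℂ] Y))ᗮ)ᗮ := fun z =>
    (Submodule.mem_orthogonal _ _).mpr fun u hu => by
      rw [inner_sub_right, ← hPsym u z, hPfix u hu, sub_self]
  have hPker : ∀ z : Y, z - P z ∈ LinearMap.ker (K : Y →ₗ[ℂ] Y) := fun z => hNN ▸ hPid z
  have hKPz : ∀ z : Y, K (P z) = K z := by
    intro z
    have h0 : K (z - P z) = 0 := LinearMap.mem_ker.mp (hPker z)
    rw [map_sub, sub_eq_zero] at h0
    exact h0.symm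
  have hRPz : ∀ z : Y, R (P z) = R z := by
    intro z
    have h0 : R (z - P z) = 0 := hkerR _ (hPker z)
    rw [map_sub, sub_eq_zero] at h0
    exact h0.symm
  have hPnorm : ∀ z : Y, ‖P z‖ ≤ ‖z‖ := by
    intro z
    have h1 : (inner ℂ (P z) (z - P z) : ℂ) = 0 :=
      (Submodule.mem_orthogonal _ _).mp (hPid z) (P z) (hPmem z)
    have h2 : ‖P z‖ ^ 2 = (inner ℂ (P z) z : ℂ).re := by
      rw [← hnormsq]
      have e : (inner ℂ (P z) z : ℂ) = inner ℂ (P z) (P z) + inner ℂ (P z) (z - P z) := by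
        rw [← inner_add_right, add_sub_cancel]
      rw [e, h1, add_zero]
    have h3 := hreCS (P z) z
    nlinarith [norm_nonneg (P z), norm_nonneg z]
  have hQPz : ∀ τ : ℝ, 0 < τ → ∀ z : Y, Q τ (P z) = Q τ z := by
    intro τ hτ z
    have h0 : Q τ (z - P z) = 0 := hQzero τ hτ _ (hPid z)
    rw [map_sub, sub_eq_zero] at h0
    exact h0.symm
  -- the operator A τ = τ • 1 + K
  have hAapp : ∀ (τ : ℝ) (u : Y), (τ • (1 : Y →L[ℂ] Y) + K) u = τ • u + K u := by
    intro τ u; simp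
  have hAre : ∀ (τ : ℝ) (u : Y),
      (inner ℂ ((τ • (1 : Y →L[ℂ] Y) + K) u) u : ℂ).re = τ * ‖u‖ ^ 2 + (inner ℂ (K u) u : ℂ).re := by
    intro τ u
    rw [hAapp]
    have e : (inner ℂ (τ • u + K u) u : ℂ) = (τ : ℂ) * inner ℂ u u + inner ℂ (K u) u := by
      rw [inner_add_left, RCLike.real_smul_eq_coe_smul (K := ℂ) τ u, inner_smul_left]
      simp
    rw [e, Complex.add_re]
    have e2 : ((τ : ℂ) * (inner ℂ u u : ℂ)).re = τ * (inner ℂ u u : ℂ).re := by simp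
    rw [e2, hnormsq]
  have hAcoerc : ∀ (τ : ℝ) (u : Y), 0 < τ →
      τ * ‖u‖ ^ 2 ≤ (inner ℂ ((τ • (1 : Y →L[ℂ] Y) + K) u) u : ℂ).re := by
    intro τ u hτ
    rw [hAre]
    linarith [hKpos u]
  have hAmem : ∀ (τ : ℝ), ∀ x ∈ (LinearMap.ker (K : Y →ₗ[ℂ] Y))ᗮ,
      (τ • (1 : Y →L[ℂ] Y) + K) x ∈ (LinearMap.ker (K : Y →ₗ[ℂ] Y))ᗮ := by
    intro τ x hx
    rw [hAapp]
    exact Submodule.add_mem _ (Submodule.smul_of_tower_mem _ τ hx) (hKN x)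
  have hAinj : ∀ τ : ℝ, 0 < τ → ∀ x ∈ (LinearMap.ker (K : Y →ₗ[ℂ] Y))ᗮ, ∀ x' ∈ (LinearMap.ker (K : Y →ₗ[ℂ] Y))ᗮ,
      (τ • (1 : Y →L[ℂ] Y) + K) x = (τ • (1 : Y →L[ℂ] Y) + K) x' → x = x' := by
    intro τ hτ x hx x' hx' h
    have h1 := hQinv τ hτ x hx
    have h2 := hQinv τ hτ x' hx'
    rw [h] at h1
    exact h1.symm.trans h2
  -- right inverse property
  have hSright : ∀ τ : ℝ, 0 < τ → ∀ z ∈ (LinearMap.ker (K : Y →ₗ[ℂ] Y))ᗮ,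
      (τ • (1 : Y →L[ℂ] Y) + K) (Q τ (Q τ z)) = z := by
    intro τ hτ
    set A : Y →L[ℂ] Y := τ • (1 : Y →L[ℂ] Y) + K with hA
    set M : Submodule ℂ Y := Submodule.map (A : Y →ₗ[ℂ] Y) (LinearMap.ker (K : Y →ₗ[ℂ] Y))ᗮ with hM
    have hMN : M ≤ (LinearMap.ker (K : Y →ₗ[ℂ] Y))ᗮ := by
      rintro _ ⟨x, hx, rfl⟩
      exact hAmem τ x hx
    have hM'N : M.topologicalClosure ≤ (LinearMap.ker (K : Y →ₗ[ℂ] Y))ᗮ :=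
      M.topologicalClosure_minimal hMN (Submodule.isClosed_orthogonal _)
    haveI : CompleteSpace M.topologicalClosure :=
      (Submodule.isClosed_topologicalClosure _).completeSpace_coe
    have hNM : ∀ z ∈ (LinearMap.ker (K : Y →ₗ[ℂ] Y))ᗮ, z ∈ M.topologicalClosure := by
      intro z hz
      obtain ⟨z₁, hz₁, z₂, hz₂, hsum⟩ := M.topologicalClosure.exists_add_mem_mem_orthogonal z
      have hz₂N : z₂ ∈ (LinearMap.ker (K : Y →ₗ[ℂ] Y))ᗮ := by
        have h : z₂ = z - z₁ := by rw [hsum]; abel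
        rw [h]; exact Submodule.sub_mem _ hz (hM'N hz₁)
      have hAz₂ : A z₂ ∈ M.topologicalClosure :=
        M.le_topologicalClosure ⟨z₂, hz₂N, rfl⟩
      have h0 : (inner ℂ (A z₂) z₂ : ℂ) = 0 :=
        (Submodule.mem_orthogonal _ _).mp hz₂ _ hAz₂
      have h1 : τ * ‖z₂‖ ^ 2 ≤ 0 := by
        have := hAcoerc τ z₂ hτ
        rw [h0] at this
        simpa using this
      have hz₂0 : z₂ = 0 := by
        have h2 : ‖z₂‖ = 0 := by
          by_contra hne
          have hpos : 0 < ‖z₂‖ := lt_of_le_of_ne (norm_nonneg z₂) (Ne.symm hne)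
          nlinarith [mul_pos hτ (pow_pos hpos 2)]
        simpa using h2
      rw [hsum, hz₂0, add_zero]
      exact hz₁
    intro z hz
    have hzM := hNM z hz
    have hclosed : IsClosed {u : Y | A (Q τ (Q τ u)) = u} :=
      isClosed_eq (A.continuous.comp ((Q τ).continuous.comp (Q τ).continuous)) continuous_id
    have hsub : (M : Set Y) ⊆ {u : Y | A (Q τ (Q τ u)) = u} := by
      rintro _ ⟨x, hx, rfl⟩
      show A (Q τ (Q τ (A x))) = A x
      rw [hQinv τ hτ x hx]
    have hzc : z ∈ closure (M : Set Y) := by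
      rw [← Submodule.topologicalClosure_coe]; exact hzM
    exact closure_minimal hsub hclosed hzc
  -- norm bound for the resolvent
  have hSbound : ∀ τ : ℝ, 0 < τ → ∀ z ∈ (LinearMap.ker (K : Y →ₗ[ℂ] Y))ᗮ, τ * ‖Q τ (Q τ z)‖ ≤ ‖z‖ := by
    intro τ hτ z hz
    have h1 := hAcoerc τ (Q τ (Q τ z)) hτ
    rw [hSright τ hτ z hz] at h1
    have h2 := hreCS z (Q τ (Q τ z))
    rcases eq_or_lt_of_le (norm_nonneg (Q τ (Q τ z))) with h0 | h0
    · rw [← h0, mul_zero]; exact norm_nonneg z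
    · nlinarith [norm_nonneg z]
  have hQnormsq : ∀ τ : ℝ, 0 < τ → ∀ z : Y, ‖Q τ z‖ ^ 2 = (inner ℂ z (Q τ (Q τ z)) : ℂ).re := by
    intro τ hτ z
    rw [← hnormsq, hQsym τ hτ z (Q τ z)]
  -- contraction property
  have hcontr : ∀ τ : ℝ, 0 < τ → ∀ w : Y, ‖Q τ (R w)‖ ≤ ‖w‖ := by
    intro τ hτ w
    set z := R w with hzdef
    have hzN : z ∈ (LinearMap.ker (K : Y →ₗ[ℂ] Y))ᗮ := hRN w
    set u := Q τ (Q τ z) with hudef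
    have hAu : (τ • (1 : Y →L[ℂ] Y) + K) u = z := hSright τ hτ z hzN
    have ht : ‖Q τ z‖ ^ 2 = (inner ℂ z u : ℂ).re := hQnormsq τ hτ z
    have ha1 : (inner ℂ z u : ℂ).re ≤ ‖R u‖ * ‖w‖ := by
      have e1 : (inner ℂ z u : ℂ).re = (inner ℂ (R u) w : ℂ).re := by
        rw [hresym z u, hzdef, ← hRsym u w]
      rw [e1]
      exact hreCS _ _
    have ha2 : ‖R u‖ ^ 2 ≤ ‖Q τ z‖ ^ 2 := by
      rw [hRnormsq u, ht]
      have e2 : (inner ℂ z u : ℂ).re = τ * ‖u‖ ^ 2 + (inner ℂ (K u) u : ℂ).re := by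
        rw [← hAu, hAre]
      rw [e2, hresym u (K u)]
      nlinarith [sq_nonneg ‖u‖, hτ.le]
    have hrq : ‖R u‖ ≤ ‖Q τ z‖ := by
      nlinarith [norm_nonneg (R u), norm_nonneg (Q τ z), sq_nonneg (‖R u‖ + ‖Q τ z‖)]
    have hq2 : ‖Q τ z‖ ^ 2 ≤ ‖Q τ z‖ * ‖w‖ := by
      calc ‖Q τ z‖ ^ 2 ≤ ‖R u‖ * ‖w‖ := by rw [ht]; exact ha1
        _ ≤ ‖Q τ z‖ * ‖w‖ := mul_le_mul_of_nonneg_right hrq (norm_nonneg w)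
    rcases eq_or_lt_of_le (norm_nonneg (Q τ z)) with h0 | h0
    · rw [← h0]; exact norm_nonneg w
    · nlinarith
  -- positivity in the Loewner/C⋆-order
  have posOf : ∀ T : Y →L[ℂ] Y, IsSelfAdjoint T → (∀ x, 0 ≤ (inner ℂ (T x) x : ℂ).re) →
      (0 : Y →L[ℂ] Y) ≤ T := by
    intro T hsa hp
    rw [ContinuousLinearMap.nonneg_iff_isPositive]
    exact ⟨hsa.isSymmetric, fun x => hp x⟩
  have hKpos' : (0 : Y →L[ℂ] Y) ≤ K := posOf K hKsa hKpos
  have hRpos' : (0 : Y →L[ℂ] Y) ≤ R := posOf R hRsa hRpos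
  have hQpos' : ∀ τ : ℝ, 0 < τ → (0 : Y →L[ℂ] Y) ≤ Q τ := fun τ hτ =>
    posOf _ (hQsa τ hτ) (hQpos τ hτ)
  have hRmul : R * R = K := hRR
  have hReq : cfc Real.sqrt K = R := cfc_sqrt_unique' hRpos' hRmul
  -- K commutes with Q τ * Q τ
  have hKScomm : ∀ τ : ℝ, 0 < τ → Commute K (Q τ * Q τ) := by
    intro τ hτ
    have key : ∀ x ∈ (LinearMap.ker (K : Y →ₗ[ℂ] Y))ᗮ, K (Q τ (Q τ x)) = Q τ (Q τ (K x)) := by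
      intro x hx
      refine hAinj τ hτ _ (hKN _) _ (hQmem τ hτ _) ?_
      have hAK : ∀ v : Y, (τ • (1 : Y →L[ℂ] Y) + K) (K v) = K ((τ • (1 : Y →L[ℂ] Y) + K) v) := by
        intro v
        rw [hAapp, hAapp, map_add, K.map_smul_of_tower]
      rw [hAK, hSright τ hτ x hx, hSright τ hτ (K x) (hKN x)]
    show K * (Q τ * Q τ) = (Q τ * Q τ) * K
    refine ContinuousLinearMap.ext fun z => ?_
    simp only [ContinuousLinearMap.mul_apply]
    have h1 : Q τ (Q τ z) = Q τ (Q τ (P z)) := congrArg (Q τ) (hQPz τ hτ z).symm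
    have h2 : K z = K (P z) := (hKPz z).symm
    rw [h1, h2]
    exact key (P z) (hPmem z)
  have hSsa : ∀ τ : ℝ, 0 < τ → IsSelfAdjoint (Q τ * Q τ) := by
    intro τ hτ
    rw [IsSelfAdjoint, star_mul, (hQsa τ hτ).star_eq]
  have hSpos' : ∀ τ : ℝ, 0 < τ → (0 : Y →L[ℂ] Y) ≤ Q τ * Q τ := by
    intro τ hτ
    refine posOf _ (hSsa τ hτ) fun x => ?_
    have e : (inner ℂ ((Q τ * Q τ) x) x : ℂ) = inner ℂ (Q τ x) (Q τ x) := hQsym τ hτ (Q τ x) x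
    rw [e]
    exact inner_self_nonneg (𝕜 := ℂ) (x := Q τ x)
  have hQeq : ∀ τ : ℝ, 0 < τ → cfc Real.sqrt (Q τ * Q τ) = Q τ := fun τ hτ =>
    cfc_sqrt_unique' (hQpos' τ hτ) rfl
  have hQK : ∀ τ : ℝ, 0 < τ → Commute (Q τ) K := by
    intro τ hτ
    have h := commute_cfc' (hKScomm τ hτ) Real.sqrt
    rw [hQeq τ hτ] at h
    exact h.symm
  have hQR : ∀ τ : ℝ, 0 < τ → Commute (Q τ) R := by
    intro τ hτ
    have h := commute_cfc' (hQK τ hτ) Real.sqrt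
    rwa [hReq] at h
  -- T := Q τ * R is selfadjoint, positive, and a contraction
  have hTsa : ∀ τ : ℝ, 0 < τ → IsSelfAdjoint (Q τ * R) := by
    intro τ hτ
    rw [IsSelfAdjoint, star_mul, hRsa.star_eq, (hQsa τ hτ).star_eq]
    exact ((hQR τ hτ).eq).symm
  have hTpos : ∀ τ : ℝ, 0 < τ → (0 : Y →L[ℂ] Y) ≤ Q τ * R := by
    intro τ hτ
    set U := cfc Real.sqrt (Q τ) with hU
    have hU0 : (0 : Y →L[ℂ] Y) ≤ U := cfc_sqrt_nonneg' _
    have hUsa : IsSelfAdjoint U := IsSelfAdjoint.of_nonneg hU0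
    have hUsym : ∀ a b : Y, (inner ℂ (U a) b : ℂ) = inner ℂ a (U b) := fun a b => hUsa.isSymmetric a b
    have hUU : U * U = Q τ := cfc_sqrt_mul_self' (hQpos' τ hτ)
    have hRU : Commute R U := commute_cfc' (hQR τ hτ).symm Real.sqrt
    refine posOf _ (hTsa τ hτ) fun x => ?_
    have e : (Q τ * R) x = U (R (U x)) := by
      have h : Q τ * R = U * (R * U) := by
        rw [← hUU, mul_assoc, ← hRU.eq]
      rw [h]
      simp [ContinuousLinearMap.mul_apply]
    rw [e]
    have e2 : (inner ℂ (U (R (U x))) x : ℂ) = inner ℂ (R (U x)) (U x) := hUsym (R (U x)) x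
    rw [e2]
    exact hRpos (U x)
  have hTT : ∀ τ : ℝ, 0 < τ → (Q τ * R) * (Q τ * R) = (Q τ * Q τ) * K := by
    intro τ hτ
    rw [← hRmul]
    calc (Q τ * R) * (Q τ * R) = Q τ * ((R * Q τ) * R) := by noncomm_ring
      _ = Q τ * ((Q τ * R) * R) := by rw [← (hQR τ hτ).eq]
      _ = (Q τ * Q τ) * (R * R) := by noncomm_ring
  -- key pointwise inequality : ⟪S K x, x⟫ ≤ ⟪T x, x⟫
  have hkey : ∀ τ : ℝ, 0 < τ → ∀ x : Y,
      (inner ℂ (Q τ (Q τ (K x))) x : ℂ).re ≤ (inner ℂ (Q τ (R x)) x : ℂ).re := by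
    intro τ hτ x
    set T : Y →L[ℂ] Y := Q τ * R with hT
    have hTpos' := hTpos τ hτ
    set V := cfc Real.sqrt T with hV
    have hV0 : (0 : Y →L[ℂ] Y) ≤ V := cfc_sqrt_nonneg' _
    have hVsa : IsSelfAdjoint V := IsSelfAdjoint.of_nonneg hV0
    have hVsym : ∀ a b : Y, (inner ℂ (V a) b : ℂ) = inner ℂ a (V b) := fun a b => hVsa.isSymmetric a b
    have hVV : V * V = T := cfc_sqrt_mul_self' hTpos'
    have hTV : Commute T V := commute_cfc' (Commute.refl T) Real.sqrt
    have hTTx : (T * T) x = V (T (V x)) := by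
      have h : T * T = V * (T * V) := by
        calc T * T = V * (V * T) := by rw [← hVV]; noncomm_ring
          _ = V * (T * V) := by rw [← hTV.eq]
      rw [h]
      simp [ContinuousLinearMap.mul_apply]
    have hTx : T x = V (V x) := by
      rw [← hVV]
      simp [ContinuousLinearMap.mul_apply]
    have h0 : Q τ (Q τ (K x)) = (T * T) x := by
      rw [hTT τ hτ]
      simp [ContinuousLinearMap.mul_apply]
    have h0' : Q τ (R x) = T x := rfl
    rw [h0, h0']
    have e1 : (inner ℂ (T x) x : ℂ) = inner ℂ (V x) (V x) := by rw [hTx]; exact hVsym (V x) x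
    have e2 : (inner ℂ ((T * T) x) x : ℂ) = inner ℂ (T (V x)) (V x) := by
      rw [hTTx]; exact hVsym (T (V x)) x
    rw [e1, e2]
    have h3 : (inner ℂ (T (V x)) (V x) : ℂ).re ≤ ‖T (V x)‖ * ‖V x‖ := hreCS _ _
    have h4 : ‖T (V x)‖ ≤ ‖V x‖ := by
      rw [hT]
      simpa only [ContinuousLinearMap.mul_apply] using hcontr τ hτ (V x)
    have h5 := hnormsq (V x)
    nlinarith [norm_nonneg (V x), norm_nonneg (T (V x))]
  -- main quantitative estimate on N
  have hest : ∀ τ : ℝ, 0 < τ → ∀ x ∈ (LinearMap.ker (K : Y →ₗ[ℂ] Y))ᗮ,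
      ‖Q τ (R x) - x‖ ^ 2 ≤ 2 * ‖x‖ * ‖τ • Q τ (Q τ x)‖ := by
    intro τ hτ x hx
    have h2 : Q τ (Q τ (K x)) = x - τ • Q τ (Q τ x) := by
      have hKx : K x = (τ • (1 : Y →L[ℂ] Y) + K) x - τ • x := by rw [hAapp]; abel
      rw [hKx, map_sub, (Q τ).map_smul_of_tower, map_sub, (Q τ).map_smul_of_tower,
        hQinv τ hτ x hx]
    have hTxx : ‖x‖ ^ 2 - ‖τ • Q τ (Q τ x)‖ * ‖x‖ ≤ (inner ℂ (Q τ (R x)) x : ℂ).re := by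
      have h1 := hkey τ hτ x
      rw [h2] at h1
      have e : (inner ℂ (x - τ • Q τ (Q τ x)) x : ℂ).re
          = ‖x‖ ^ 2 - (inner ℂ (τ • Q τ (Q τ x)) x : ℂ).re := by
        rw [inner_sub_left, Complex.sub_re, hnormsq]
      rw [e] at h1
      have h2' := hreCS (τ • Q τ (Q τ x)) x
      linarith
    have hexp : ‖Q τ (R x) - x‖ ^ 2
        = ‖Q τ (R x)‖ ^ 2 - 2 * (inner ℂ (Q τ (R x)) x : ℂ).re + ‖x‖ ^ 2 := by
      rw [← hnormsq, inner_sub_sub_self]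
      simp only [Complex.add_re, Complex.sub_re]
      rw [hnormsq, hnormsq, hresym x (Q τ (R x))]
      ring
    have hTn := hcontr τ hτ x
    nlinarith [hexp, hTxx, hTn, norm_nonneg x, norm_nonneg (Q τ (R x)),
      mul_self_le_mul_self (norm_nonneg (Q τ (R x))) hTn]
  -- density of the range of K in N
  have hdense : ∀ x ∈ (LinearMap.ker (K : Y →ₗ[ℂ] Y))ᗮ, ∀ ε > (0 : ℝ), ∃ w : Y, ‖x - K w‖ < ε := by
    intro x hx ε hε
    set C := (LinearMap.range (K : Y →ₗ[ℂ] Y)).topologicalClosure with hC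
    have hCN : (LinearMap.range (K : Y →ₗ[ℂ] Y) : Submodule ℂ Y) ≤ (LinearMap.ker (K : Y →ₗ[ℂ] Y))ᗮ := by
      rintro _ ⟨w, rfl⟩; exact hKN w
    have hC'N : C ≤ (LinearMap.ker (K : Y →ₗ[ℂ] Y))ᗮ :=
      (LinearMap.range (K : Y →ₗ[ℂ] Y)).topologicalClosure_minimal hCN (Submodule.isClosed_orthogonal _)
    haveI : CompleteSpace C := (Submodule.isClosed_topologicalClosure _).completeSpace_coe
    have hxC : x ∈ C := by
      obtain ⟨z₁, hz₁, z₂, hz₂, hsum⟩ := C.exists_add_mem_mem_orthogonal x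
      have hz₂N : z₂ ∈ (LinearMap.ker (K : Y →ₗ[ℂ] Y))ᗮ := by
        have h : z₂ = x - z₁ := by rw [hsum]; abel
        rw [h]; exact Submodule.sub_mem _ hx (hC'N hz₁)
      have hKz₂ : (inner ℂ (K z₂) z₂ : ℂ) = 0 :=
        (Submodule.mem_orthogonal _ _).mp hz₂ _
          ((LinearMap.range (K : Y →ₗ[ℂ] Y)).le_topologicalClosure ⟨z₂, rfl⟩)
      have hRz₂ : R z₂ = 0 := by
        have h1 : ‖R z₂‖ ^ 2 = 0 := by
          rw [hRnormsq z₂, hresym z₂ (K z₂), hKz₂, Complex.zero_re]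
        have h2 : ‖R z₂‖ = 0 := by nlinarith [norm_nonneg (R z₂)]
        simpa using h2
      have hKz₂0 : z₂ ∈ LinearMap.ker (K : Y →ₗ[ℂ] Y) := by
        have : K z₂ = 0 := by rw [← hRRapp z₂, hRz₂, map_zero]
        exact LinearMap.mem_ker.mpr this
      have hz₂0 : z₂ = 0 := by
        have h00 : (inner ℂ z₂ z₂ : ℂ) = 0 := (Submodule.mem_orthogonal _ _).mp hz₂N z₂ hKz₂0
        exact inner_self_eq_zero.mp h00
      rw [hsum, hz₂0, add_zero]
      exact hz₁
    have hclos : x ∈ closure ((LinearMap.range (K : Y →ₗ[ℂ] Y) : Submodule ℂ Y) : Set Y) := by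
      rw [← Submodule.topologicalClosure_coe]; exact hxC
    rw [Metric.mem_closure_iff] at hclos
    obtain ⟨b, hb, hdist⟩ := hclos ε hε
    obtain ⟨w, rfl⟩ := hb
    exact ⟨w, by rwa [dist_eq_norm] at hdist⟩
  -- resolvent convergence
  have hres : ∀ x ∈ (LinearMap.ker (K : Y →ₗ[ℂ] Y))ᗮ,
      Tendsto (fun τ => ‖τ • Q τ (Q τ x)‖) (nhdsWithin 0 (Set.Ioi 0)) (nhds 0) := by
    intro x hx
    rw [Metric.tendsto_nhdsWithin_nhds]
    intro ε hε
    obtain ⟨w, hw⟩ := hdense x hx (ε / 2) (by linarith)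
    refine ⟨ε / (4 * (‖P w‖ + 1)), by positivity, ?_⟩
    intro τ hτmem hτd
    have hτ : 0 < τ := hτmem
    rw [Real.dist_eq, sub_zero, abs_of_pos hτ] at hτd
    have hb1 : ∀ z : Y, τ * ‖Q τ (Q τ z)‖ ≤ ‖P z‖ := by
      intro z
      have h : Q τ (Q τ z) = Q τ (Q τ (P z)) := congrArg (Q τ) (hQPz τ hτ z).symm
      rw [h]
      exact hSbound τ hτ (P z) (hPmem z)
    have hsplit : Q τ (Q τ x) = Q τ (Q τ (x - K w)) + Q τ (Q τ (K w)) := by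
      rw [← map_add, ← map_add, sub_add_cancel]
    have hKw : K w = K (P w) := (hKPz w).symm
    have h2 : Q τ (Q τ (K (P w))) = P w - τ • Q τ (Q τ (P w)) := by
      have hKx : K (P w) = (τ • (1 : Y →L[ℂ] Y) + K) (P w) - τ • (P w) := by rw [hAapp]; abel
      rw [hKx, map_sub, (Q τ).map_smul_of_tower, map_sub, (Q τ).map_smul_of_tower,
        hQinv τ hτ (P w) (hPmem w)]
    have e1 : ‖τ • Q τ (Q τ (x - K w))‖ ≤ ‖x - K w‖ := by
      rw [norm_smul, Real.norm_eq_abs, abs_of_pos hτ]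
      calc τ * ‖Q τ (Q τ (x - K w))‖ ≤ ‖P (x - K w)‖ := hb1 _
        _ ≤ ‖x - K w‖ := hPnorm _
    have e2 : ‖τ • Q τ (Q τ (K w))‖ ≤ 2 * τ * ‖P w‖ := by
      rw [hKw, norm_smul, Real.norm_eq_abs, abs_of_pos hτ, h2]
      have h3 := hSbound τ hτ (P w) (hPmem w)
      have h4 : ‖P w - τ • Q τ (Q τ (P w))‖ ≤ ‖P w‖ + τ * ‖Q τ (Q τ (P w))‖ := by
        calc ‖P w - τ • Q τ (Q τ (P w))‖ ≤ ‖P w‖ + ‖τ • Q τ (Q τ (P w))‖ := norm_sub_le _ _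
          _ = ‖P w‖ + τ * ‖Q τ (Q τ (P w))‖ := by
              rw [norm_smul, Real.norm_eq_abs, abs_of_pos hτ]
      calc τ * ‖P w - τ • Q τ (Q τ (P w))‖ ≤ τ * (‖P w‖ + τ * ‖Q τ (Q τ (P w))‖) :=
            mul_le_mul_of_nonneg_left h4 hτ.le
        _ ≤ τ * (‖P w‖ + ‖P w‖) := by nlinarith [hτ.le, h3]
        _ = 2 * τ * ‖P w‖ := by ring
    rw [Real.dist_eq, sub_zero, abs_of_nonneg (norm_nonneg _)]
    have hτb : τ * (4 * (‖P w‖ + 1)) < ε := by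
      rwa [lt_div_iff₀ (by positivity)] at hτd
    calc ‖τ • Q τ (Q τ x)‖ = ‖τ • Q τ (Q τ (x - K w)) + τ • Q τ (Q τ (K w))‖ := by
          rw [hsplit, smul_add]
      _ ≤ ‖τ • Q τ (Q τ (x - K w))‖ + ‖τ • Q τ (Q τ (K w))‖ := norm_add_le _ _
      _ ≤ ‖x - K w‖ + 2 * τ * ‖P w‖ := add_le_add e1 e2
      _ < ε / 2 + ε / 2 := by
          refine add_lt_add hw ?_
          nlinarith [norm_nonneg (P w), hτ]
      _ = ε := by ring
  -- final assembly
  intro y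
  have hxN : P y ∈ (LinearMap.ker (K : Y →ₗ[ℂ] Y))ᗮ := hPmem y
  have hRy : R y = R (P y) := (hRPz y).symm
  rw [Metric.tendsto_nhds]
  intro ε hε
  have hres' := Metric.tendsto_nhds.mp (hres (P y) hxN) (ε ^ 2 / (2 * ‖P y‖ + 2)) (by positivity)
  filter_upwards [hres', self_mem_nhdsWithin] with τ h1 h2
  have hτ : 0 < τ := h2
  rw [Real.dist_eq, sub_zero, abs_of_nonneg (norm_nonneg _)] at h1
  rw [dist_eq_norm]
  have hb := hest τ hτ (P y) hxN
  rw [← hRy] at hb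
  have hd0 : (0 : ℝ) ≤ ‖Q τ (R y) - P y‖ := norm_nonneg _
  have hny : (0 : ℝ) ≤ ‖P y‖ := norm_nonneg _
  have hs := norm_nonneg (τ • Q τ (Q τ (P y)))
  have h1' : ‖τ • Q τ (Q τ (P y))‖ * (2 * ‖P y‖ + 2) < ε ^ 2 := by
    rw [lt_div_iff₀ (by positivity)] at h1
    linarith
  have hd2 : ‖Q τ (R y) - P y‖ ^ 2 < ε ^ 2 := by nlinarith
  exact lt_of_pow_lt_pow_left₀ 2 hε.le hd2
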